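/- Let f : S² → ℝ be a continuous odd L-good function. Then there exists a constant ν > 0 such that for every p ∈ S² and every unit tangent vector u at p there exists a unit tangent vector v at p with ⟨u,v⟩ > 0 and ∫₀^π f(γ_{p,v}(t)) dt < −ν. -/

import Mathlib

open scoped RealInnerProductSpace
open Real

noncomputable section

/-- Euclidean 3-space. -/
abbrev E3 : Type := EuclideanSpace ℝ (Fin 3)

/-- The unit sphere S² in ℝ³. -/
def sphere2 : Set E3 := {x : E3 | ‖x‖ = 1}

/-- The round (geodesic) distance ρ(p,q) = arccos⟨p,q⟩ on S². -/
def rho (p q : E3) : ℝ := Real.arccos ⟪p, q⟫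

/-- `UnitTangent p v` : `v` is a unit tangent vector at `p`. -/
def UnitTangent (p v : E3) : Prop := ‖v‖ = 1 ∧ ⟪p, v⟫ = 0

/-- The unit-speed great-circle arc γ_{p,v}(t) = (cos t)·p + (sin t)·v. -/
def geo (p v : E3) (t : ℝ) : E3 := (Real.cos t) • p + (Real.sin t) • v
/-- `f` is L-good: at every point of the sphere and in every open semicircle of
tangent directions there is a direction whose great half-circle integrates `f`
negatively. -/
def LGood (f : E3 → ℝ) : Prop :=
  ∀ p ∈ sphere2, ∀ u : E3, UnitTangent p u →
    ∃ v : E3, UnitTangent p v ∧ 0 < ⟪u, v⟫ ∧ (∫ t in (0:ℝ)..π, f (geo p v t)) < 0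

lemma geo_mem_sphere2 {p v : E3} (hp : p ∈ sphere2) (hv : UnitTangent p v) (t : ℝ) :
    geo p v t ∈ sphere2 := by
  have hnorm : ‖geo p v t‖ ^ 2 = 1 := by
    rw [show (1:ℝ) = Real.cos t ^ 2 + Real.sin t ^ 2 from (Real.cos_sq_add_sin_sq t).symm]
    rw [geo, norm_add_sq_real, real_inner_smul_left, real_inner_smul_right,
      norm_smul, norm_smul, hv.2]
    have h1 : ‖p‖ = 1 := hp
    simp [h1, hv.1, mul_pow]
  have h0 : (0:ℝ) ≤ ‖geo p v t‖ := norm_nonneg _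
  have hfac : (‖geo p v t‖ - 1) * (‖geo p v t‖ + 1) = 0 := by nlinarith
  rcases mul_eq_zero.1 hfac with h | h
  · show ‖geo p v t‖ = 1; linarith
  · exfalso; linarith

lemma K_compact : IsCompact {z : E3 × E3 | z.1 ∈ sphere2 ∧ UnitTangent z.1 z.2} := by
  apply Metric.isCompact_of_isClosed_isBounded
  · apply IsClosed.inter
    · exact isClosed_eq (continuous_norm.comp continuous_fst) continuous_const
    · apply IsClosed.inter
      · exact isClosed_eq (continuous_norm.comp continuous_snd) continuous_const
      · exact isClosed_eq (continuous_fst.inner continuous_snd) continuous_const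
  · apply (Metric.isBounded_closedBall (x := (0 : E3 × E3)) (r := 1)).subset
    intro z hz
    rw [Metric.mem_closedBall, dist_zero_right, Prod.norm_def]
    have h1 : ‖z.1‖ = 1 := hz.1
    have h2 : ‖z.2‖ = 1 := hz.2.1
    simp [h1, h2]

/-- For a continuous odd L-good function `f`, the negativity of the integrals
over great half-circles is uniform: there is a `ν > 0` working at all points
and all semicircles of directions. -/
theorem lgood_uniform (f : E3 → ℝ) (hf : ContinuousOn f sphere2)
    (hodd : ∀ x ∈ sphere2, f (-x) = -f x) (hgood : LGood f) :
    ∃ ν > (0:ℝ), ∀ p ∈ sphere2, ∀ u : E3, UnitTangent p u →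
      ∃ v : E3, UnitTangent p v ∧ 0 < ⟪u, v⟫ ∧
        (∫ t in (0:ℝ)..π, f (geo p v t)) < -ν := by
  classical
  have hclosed : IsClosed sphere2 := isClosed_eq continuous_norm continuous_const
  obtain ⟨g, hg⟩ := ContinuousMap.exists_restrict_eq (Y := ℝ) hclosed
    ⟨sphere2.restrict f, hf.restrict⟩
  have hgf : ∀ x ∈ sphere2, g x = f x := by
    intro x hx
    exact ContinuousMap.congr_fun hg ⟨x, hx⟩
  set G : E3 × E3 → ℝ := fun z => ∫ t in (0:ℝ)..π, g (geo z.1 z.2 t) with hGdef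
  have hGcont : Continuous G := by
    apply intervalIntegral.continuous_parametric_intervalIntegral_of_continuous'
      (f := fun (z : E3 × E3) (t : ℝ) => g (geo z.1 z.2 t))
    have : Continuous fun q : (E3 × E3) × ℝ =>
        (Real.cos q.2) • q.1.1 + (Real.sin q.2) • q.1.2 := by fun_prop
    exact g.continuous.comp this
  have hGeq : ∀ p v : E3, p ∈ sphere2 → UnitTangent p v →
      (∫ t in (0:ℝ)..π, f (geo p v t)) = G (p, v) := by
    intro p v hp hv
    apply intervalIntegral.integral_congr
    intro t _
    exact (hgf _ (geo_mem_sphere2 hp hv t)).symm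
  set K : Set (E3 × E3) := {z | z.1 ∈ sphere2 ∧ UnitTangent z.1 z.2} with hKdef
  set Q : ℕ → E3 × E3 → Prop := fun n z =>
    ∃ v, UnitTangent z.1 v ∧ 0 < ⟪z.2, v⟫ ∧ G (z.1, v) < -(1 / (n + 1)) with hQdef
  set W : ℕ → Set (E3 × E3) := fun n => {z | ∀ᶠ z' in nhds z, z' ∈ K → Q n z'} with hWdef
  have hWopen : ∀ n, IsOpen (W n) := fun n => isOpen_setOf_eventually_nhds
  have hcover : K ⊆ ⋃ n, W n := by
    intro z hz
    obtain ⟨hz1, hz2⟩ := hz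
    obtain ⟨v, hv, huv, hneg⟩ := hgood z.1 hz1 z.2 hz2
    rw [hGeq z.1 v hz1 hv] at hneg
    obtain ⟨n, hn⟩ := exists_nat_one_div_lt (show (0:ℝ) < -(G (z.1, v)) by linarith)
    refine Set.mem_iUnion.2 ⟨n, ?_⟩
    -- projection of v to nearby tangent planes
    set w : E3 → E3 := fun q => v - ⟪q, v⟫ • q with hwdef
    have hwcont : Continuous w := by
      fun_prop
    have hwp : w z.1 = v := by
      show v - ⟪z.1, v⟫ • z.1 = v
      rw [hv.2, zero_smul, sub_zero]
    set Nv : E3 → E3 := fun q => ‖w q‖⁻¹ • w q with hNdef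
    have hNcont : ContinuousAt Nv z.1 := by
      apply ContinuousAt.fun_smul
      · apply ContinuousAt.inv₀ hwcont.norm.continuousAt
        rw [hwp, hv.1]; norm_num
      · exact hwcont.continuousAt
    have hNp : Nv z.1 = v := by
      show ‖w z.1‖⁻¹ • w z.1 = v
      rw [hwp, hv.1, inv_one, one_smul]
    have h1 : ∀ᶠ z' in nhds z, (0:ℝ) < ‖w z'.1‖ := by
      apply ContinuousAt.eventually_lt continuousAt_const
        ((hwcont.norm.comp continuous_fst).continuousAt)
      show (0:ℝ) < ‖w z.1‖
      rw [hwp, hv.1]; norm_num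
    have h2 : ∀ᶠ z' in nhds z, (0:ℝ) < ⟪z'.2, Nv z'.1⟫ := by
      apply ContinuousAt.eventually_lt continuousAt_const
      · exact continuous_snd.continuousAt.inner (hNcont.comp continuous_fst.continuousAt)
      · show (0:ℝ) < ⟪z.2, Nv z.1⟫
        rw [hNp]; exact huv
    have h3 : ∀ᶠ z' in nhds z, G (z'.1, Nv z'.1) < -(1 / (n + 1)) := by
      apply ContinuousAt.eventually_lt _ continuousAt_const
      · show G (z.1, Nv z.1) < -(1 / (n + 1))
        rw [hNp]; linarith
      · exact hGcont.continuousAt.comp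
          (continuous_fst.continuousAt.prodMk (hNcont.comp continuous_fst.continuousAt))
    filter_upwards [h1, h2, h3] with z' hz1' hz2' hz3' hK'
    refine ⟨Nv z'.1, ⟨?_, ?_⟩, hz2', hz3'⟩
    · rw [hNdef]
      simp only
      rw [norm_smul, norm_inv, norm_norm, inv_mul_cancel₀ (ne_of_gt hz1')]
    · have hq : ‖z'.1‖ = 1 := hK'.1
      rw [hNdef]
      simp only
      rw [real_inner_smul_right, hwdef]
      simp only
      rw [inner_sub_right, real_inner_smul_right, real_inner_self_eq_norm_sq, hq]
      ring
  obtain ⟨t, ht⟩ := K_compact.elim_finite_subcover W hWopen hcover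
  set N : ℕ := t.sup id with hNdef
  refine ⟨1 / (N + 1), by positivity, ?_⟩
  intro p hp u hu
  have hzK : (p, u) ∈ K := ⟨hp, hu⟩
  obtain ⟨n, hnmem, hzW⟩ := Set.mem_iUnion₂.1 (ht hzK)
  have hQ : Q n (p, u) := hzW.self_of_nhds hzK
  obtain ⟨v, hv, huv, hneg⟩ := hQ
  refine ⟨v, hv, huv, ?_⟩
  rw [hGeq p v hp hv]
  have hle : (1:ℝ) / (N + 1) ≤ 1 / (n + 1) := by
    apply one_div_le_one_div_of_le (by positivity)
    have : n ≤ N := Finset.le_sup (f := id) hnmem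
    exact_mod_cast Nat.succ_le_succ this
  linarith
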